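/- Let Σ₁, …, Σ_n be symmetric positive definite d×d real matrices and λ₁, …, λ_n real weights with Σ_{k=1}^n λ_k = 1. For every symmetric positive semidefinite matrix S, F(S) ≥ Tr(S) − 2·(A_max − B_min)·Tr(S^{1/2}) + Σ_{k=1}^n λ_k Tr(Σ_k), where A_max = Σ_{i∈I} λ_i⁺ √λ_max(Σ_i) and B_min = Σ_{j∈J} λ_j⁻ √λ_min(Σ_j). -/

import Mathlib

open Matrix BigOperators Finset
open scoped Classical

/-- Unique positive semidefinite square root of a positive semidefinite matrix
(and junk value `0` on other matrices). -/
noncomputable def msqrt {d : ℕ} (M : Matrix (Fin d) (Fin d) ℝ) :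
    Matrix (Fin d) (Fin d) ℝ :=
  if h : M.PosSemidef then
    h.1.eigenvectorUnitary.1 * diagonal ((↑) ∘ (√·) ∘ h.1.eigenvalues) *
      (star h.1.eigenvectorUnitary : Matrix (Fin d) (Fin d) ℝ)
  else 0

/-- Smallest eigenvalue of a symmetric matrix (junk value `0` otherwise). -/
noncomputable def lmin {d : ℕ} (M : Matrix (Fin d) (Fin d) ℝ) : ℝ :=
  if h : M.IsHermitian then ⨅ i, h.eigenvalues i else 0

/-- Largest eigenvalue of a symmetric matrix (junk value `0` otherwise). -/
noncomputable def lmax {d : ℕ} (M : Matrix (Fin d) (Fin d) ℝ) : ℝ :=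
  if h : M.IsHermitian then ⨆ i, h.eigenvalues i else 0

/-- Squared Bures–Wasserstein distance. -/
noncomputable def W2sq {d : ℕ} (A B : Matrix (Fin d) (Fin d) ℝ) : ℝ :=
  A.trace + B.trace - 2 * (msqrt (msqrt A * B * msqrt A)).trace

/-- The conditional barycenter objective `F`. -/
noncomputable def Fobj {d n : ℕ} (Sig : Fin n → Matrix (Fin d) (Fin d) ℝ)
    (lam : Fin n → ℝ) (S : Matrix (Fin d) (Fin d) ℝ) : ℝ :=
  ∑ k, lam k * W2sq S (Sig k)

/-- Geometric mean `GM(S⁻¹, Σ) = S^{-1/2} (S^{1/2} Σ S^{1/2})^{1/2} S^{-1/2}`. -/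
noncomputable def GMinv {d : ℕ} (S Sigma : Matrix (Fin d) (Fin d) ℝ) :
    Matrix (Fin d) (Fin d) ℝ :=
  (msqrt S)⁻¹ * msqrt (msqrt S * Sigma * msqrt S) * (msqrt S)⁻¹

/-- The Spectral Dominance of Positive Weights condition. -/
def SDPW {d n : ℕ} (Sig : Fin n → Matrix (Fin d) (Fin d) ℝ) (lam : Fin n → ℝ) : Prop :=
  ∑ j ∈ Finset.univ.filter (fun k => lam k < 0), (-lam j) * Real.sqrt (lmax (Sig j))
    < ∑ i ∈ Finset.univ.filter (fun k => 0 < lam k), lam i * Real.sqrt (lmin (Sig i))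

section SqrtHelpers
open scoped MatrixOrder
variable {d : ℕ}

lemma Matrix.IsHermitian.posSemidef_of_eigenvalues_nonneg {A : Matrix (Fin d) (Fin d) ℝ}
    (hA : A.IsHermitian) (h : ∀ i, 0 ≤ hA.eigenvalues i) : A.PosSemidef :=
  hA.posSemidef_iff_eigenvalues_nonneg.mpr h

noncomputable def Matrix.PosSemidef.sqrt {A : Matrix (Fin d) (Fin d) ℝ} (hA : A.PosSemidef) :
    Matrix (Fin d) (Fin d) ℝ :=
  hA.1.eigenvectorUnitary.1 * diagonal ((↑) ∘ (√·) ∘ hA.1.eigenvalues) *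
    (star hA.1.eigenvectorUnitary : Matrix (Fin d) (Fin d) ℝ)

lemma Matrix.PosSemidef.posSemidef_sqrt {A : Matrix (Fin d) (Fin d) ℝ} (hA : A.PosSemidef) :
    hA.sqrt.PosSemidef := by
  unfold Matrix.PosSemidef.sqrt
  rw [Matrix.star_eq_conjTranspose]
  exact (Matrix.PosSemidef.diagonal (fun i => by simp [Real.sqrt_nonneg])).mul_mul_conjTranspose_same _

lemma Matrix.PosSemidef.sqrt_mul_self {A : Matrix (Fin d) (Fin d) ℝ} (hA : A.PosSemidef) :
    hA.sqrt * hA.sqrt = A := by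
  unfold Matrix.PosSemidef.sqrt
  have hU : (star hA.1.eigenvectorUnitary : Matrix (Fin d) (Fin d) ℝ) *
      hA.1.eigenvectorUnitary.1 = 1 := by
    exact Matrix.mem_unitaryGroup_iff'.mp hA.1.eigenvectorUnitary.2
  have hD : diagonal ((↑) ∘ (√·) ∘ hA.1.eigenvalues) * diagonal ((↑) ∘ (√·) ∘ hA.1.eigenvalues)
      = diagonal hA.1.eigenvalues := by
    rw [diagonal_mul_diagonal]
    congr 1; funext i
    simp [Real.mul_self_sqrt (hA.eigenvalues_nonneg i)]
  have := hA.1.spectral_theorem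
  calc _ = hA.1.eigenvectorUnitary.1 * (diagonal ((↑) ∘ (√·) ∘ hA.1.eigenvalues) *
        ((star hA.1.eigenvectorUnitary : Matrix (Fin d) (Fin d) ℝ) *
      hA.1.eigenvectorUnitary.1) * diagonal ((↑) ∘ (√·) ∘ hA.1.eigenvalues)) *
        (star hA.1.eigenvectorUnitary : Matrix (Fin d) (Fin d) ℝ) := by
        simp only [Matrix.mul_assoc]
    _ = _ := by
      rw [hU, Matrix.mul_one, hD]
      simpa using this.symm

lemma Matrix.PosSemidef.sq_sqrt {A : Matrix (Fin d) (Fin d) ℝ} (hA : A.PosSemidef) :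
    hA.sqrt ^ 2 = A := by
  rw [sq]; exact hA.sqrt_mul_self

lemma Matrix.PosSemidef.eq_sqrt_of_sq_eq {B : Matrix (Fin d) (Fin d) ℝ}
    (hB : B.PosSemidef) {A : Matrix (Fin d) (Fin d) ℝ} (hA : A.PosSemidef) (h : B ^ 2 = A) :
    B = hA.sqrt := by
  have h1 : CFC.sqrt A = hA.sqrt :=
    CFC.sqrt_unique hA.sqrt_mul_self hA.posSemidef_sqrt.nonneg
  have h2 : CFC.sqrt A = B := CFC.sqrt_unique (by rw [← sq]; exact h) hB.nonneg
  rw [← h1, h2]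

end SqrtHelpers

section AuxLemmas
variable {d : ℕ}

lemma psd_trace_nonneg {A : Matrix (Fin d) (Fin d) ℝ} (hA : A.PosSemidef) : 0 ≤ A.trace := by
  rw [Matrix.trace]
  apply Finset.sum_nonneg
  intro i _
  have h := hA.diag_nonneg (i := i)
  simpa [Matrix.mulVec_single, dotProduct, Pi.single_apply, Matrix.diag] using h

lemma trace_mono' {A B : Matrix (Fin d) (Fin d) ℝ} (h : (B - A).PosSemidef) :
    A.trace ≤ B.trace := by
  have := psd_trace_nonneg h
  rw [Matrix.trace_sub] at this
  linarith

lemma psd_smul {A : Matrix (Fin d) (Fin d) ℝ} (hA : A.PosSemidef) {c : ℝ} (hc : 0 ≤ c) :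
    (c • A).PosSemidef := by
  refine ⟨?_, fun x => ?_⟩
  · unfold Matrix.IsHermitian
    rw [Matrix.conjTranspose_smul, star_trivial, hA.1.eq]
  · exact (hA.smul hc).2 x

lemma msqrt_of_psd {A : Matrix (Fin d) (Fin d) ℝ} (hA : A.PosSemidef) : msqrt A = hA.sqrt := by
  simp only [msqrt, dif_pos hA]; rfl

lemma msqrt_smul {A : Matrix (Fin d) (Fin d) ℝ} (hA : A.PosSemidef) {c : ℝ} (hc : 0 ≤ c) :
    msqrt (c • A) = Real.sqrt c • msqrt A := by
  rw [msqrt_of_psd (psd_smul hA hc), msqrt_of_psd hA]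
  refine ((psd_smul hA.posSemidef_sqrt (Real.sqrt_nonneg c)).eq_sqrt_of_sq_eq _ ?_).symm
  rw [smul_pow, hA.sq_sqrt, Real.sq_sqrt hc]

lemma sqrt_loewner_mono {A B : Matrix (Fin d) (Fin d) ℝ}
    (hA : A.PosSemidef) (hB : B.PosSemidef) (hAB : (B - A).PosSemidef) :
    (hB.sqrt - hA.sqrt).PosSemidef := by
  have hT : (hB.sqrt - hA.sqrt).IsHermitian :=
    hB.posSemidef_sqrt.1.sub hA.posSemidef_sqrt.1
  apply hT.posSemidef_of_eigenvalues_nonneg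
  intro i
  set T := hB.sqrt - hA.sqrt with hTdef
  set x : Fin d → ℝ := ⇑(hT.eigenvectorBasis i) with hxdef
  set μ := hT.eigenvalues i with hμdef
  have hx : T *ᵥ x = μ • x := hT.mulVec_eigenvectorBasis i
  have hxne : x ≠ 0 := by
    intro h
    exact hT.eigenvectorBasis.orthonormal.ne_zero i (by ext j; exact congrFun h j)
  have hdecomp : B - A = hB.sqrt * T + T * hA.sqrt := by
    simp only [hTdef, mul_sub, sub_mul, hB.sqrt_mul_self, hA.sqrt_mul_self]
    abel
  have hvm : x ᵥ* T = μ • x := by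
    have : T = Tᵀ := by
      rw [← Matrix.conjTranspose_eq_transpose_of_trivial, hT.eq]
    rw [this, Matrix.vecMul_transpose]; exact hx
  have e1 : x ⬝ᵥ ((B - A) *ᵥ x)
      = μ * (x ⬝ᵥ (hB.sqrt *ᵥ x)) + μ * (x ⬝ᵥ (hA.sqrt *ᵥ x)) := by
    rw [hdecomp, Matrix.add_mulVec, dotProduct_add]
    congr 1
    · rw [← Matrix.mulVec_mulVec, hx, Matrix.mulVec_smul, dotProduct_smul, smul_eq_mul]
    · rw [← Matrix.mulVec_mulVec, Matrix.dotProduct_mulVec, hvm, smul_dotProduct,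
        smul_eq_mul]
  have h0 : 0 ≤ x ⬝ᵥ ((B - A) *ᵥ x) := by
    have := hAB.dotProduct_mulVec_nonneg x
    simpa using this
  have hp : 0 ≤ x ⬝ᵥ (hB.sqrt *ᵥ x) := by simpa using hB.posSemidef_sqrt.dotProduct_mulVec_nonneg x
  have hq : 0 ≤ x ⬝ᵥ (hA.sqrt *ᵥ x) := by simpa using hA.posSemidef_sqrt.dotProduct_mulVec_nonneg x
  rcases eq_or_lt_of_le (add_nonneg hp hq) with h | h
  · have hp0 : x ⬝ᵥ (hB.sqrt *ᵥ x) = 0 := by linarith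
    have hq0 : x ⬝ᵥ (hA.sqrt *ᵥ x) = 0 := by linarith
    have hB0 : hB.sqrt *ᵥ x = 0 :=
      (hB.posSemidef_sqrt.dotProduct_mulVec_zero_iff x).mp (by simpa using hp0)
    have hA0 : hA.sqrt *ᵥ x = 0 :=
      (hA.posSemidef_sqrt.dotProduct_mulVec_zero_iff x).mp (by simpa using hq0)
    have hzero : μ • x = 0 := by
      rw [← hx, hTdef, Matrix.sub_mulVec, hB0, hA0, sub_zero]
    rcases smul_eq_zero.mp hzero with h' | h'
    · exact h'.ge
    · exact absurd h' hxne
  · nlinarith [h0, e1]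

lemma conj_diag_psd {A : Matrix (Fin d) (Fin d) ℝ} (hA : A.IsHermitian) (f : Fin d → ℝ)
    (hf : ∀ i, 0 ≤ f i) :
    ((hA.eigenvectorUnitary : Matrix (Fin d) (Fin d) ℝ) * Matrix.diagonal f *
      star (hA.eigenvectorUnitary : Matrix (Fin d) (Fin d) ℝ)).PosSemidef := by
  rw [Matrix.star_eq_conjTranspose]
  exact (Matrix.PosSemidef.diagonal hf).mul_mul_conjTranspose_same _

lemma conj_diag_eigen {A : Matrix (Fin d) (Fin d) ℝ} (hA : A.IsHermitian) :
    (hA.eigenvectorUnitary : Matrix (Fin d) (Fin d) ℝ) * Matrix.diagonal hA.eigenvalues *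
      star (hA.eigenvectorUnitary : Matrix (Fin d) (Fin d) ℝ) = A := by
  have := hA.spectral_theorem
  simpa using this.symm

lemma UU_star {A : Matrix (Fin d) (Fin d) ℝ} (hA : A.IsHermitian) :
    (hA.eigenvectorUnitary : Matrix (Fin d) (Fin d) ℝ) *
      star (hA.eigenvectorUnitary : Matrix (Fin d) (Fin d) ℝ) = 1 :=
  Matrix.mem_unitaryGroup_iff.mp hA.eigenvectorUnitary.2

lemma conj_diag_split {A : Matrix (Fin d) (Fin d) ℝ} (hA : A.IsHermitian) (c : ℝ) :
    (hA.eigenvectorUnitary : Matrix (Fin d) (Fin d) ℝ) *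
      Matrix.diagonal (fun i => hA.eigenvalues i - c) *
      star (hA.eigenvectorUnitary : Matrix (Fin d) (Fin d) ℝ) = A - c • 1 := by
  set U : Matrix (Fin d) (Fin d) ℝ := (hA.eigenvectorUnitary : Matrix (Fin d) (Fin d) ℝ)
  have h1 : (Matrix.diagonal (fun i => hA.eigenvalues i - c) : Matrix (Fin d) (Fin d) ℝ)
      = Matrix.diagonal hA.eigenvalues - c • 1 := by
    ext i j
    rcases eq_or_ne i j with h | h <;>
      simp [Matrix.diagonal_apply, Matrix.sub_apply, Matrix.smul_apply, Matrix.one_apply, h]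
  rw [h1, Matrix.mul_sub, Matrix.sub_mul, conj_diag_eigen hA]
  congr 1
  rw [Matrix.mul_smul, Matrix.smul_mul, Matrix.mul_one, UU_star hA]

lemma shift_lower {A : Matrix (Fin d) (Fin d) ℝ} (hA : A.IsHermitian) {c : ℝ}
    (h : ∀ i, c ≤ hA.eigenvalues i) : (A - c • 1).PosSemidef := by
  rw [← conj_diag_split hA c]
  exact conj_diag_psd hA _ (fun i => by linarith [h i])

lemma shift_upper {A : Matrix (Fin d) (Fin d) ℝ} (hA : A.IsHermitian) {c : ℝ}
    (h : ∀ i, hA.eigenvalues i ≤ c) : (c • 1 - A).PosSemidef := by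
  have key : c • (1 : Matrix (Fin d) (Fin d) ℝ) - A
      = (hA.eigenvectorUnitary : Matrix (Fin d) (Fin d) ℝ) *
        Matrix.diagonal (fun i => c - hA.eigenvalues i) *
        star (hA.eigenvectorUnitary : Matrix (Fin d) (Fin d) ℝ) := by
    have h2 := conj_diag_split hA c
    have h3 : (Matrix.diagonal (fun i => c - hA.eigenvalues i) : Matrix (Fin d) (Fin d) ℝ)
        = - Matrix.diagonal (fun i => hA.eigenvalues i - c) := by
      ext i j
      rcases eq_or_ne i j with h | h <;>
        simp [Matrix.diagonal_apply, Matrix.neg_apply, h]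
    rw [h3, Matrix.mul_neg, Matrix.neg_mul, h2]
    abel
  rw [key]
  exact conj_diag_psd hA _ (fun i => by linarith [h i])

lemma eig_le_lmax {P : Matrix (Fin d) (Fin d) ℝ} (hP : P.IsHermitian) (i : Fin d) :
    hP.eigenvalues i ≤ lmax P := by
  simp only [lmax, dif_pos hP]
  exact le_ciSup (Set.Finite.bddAbove (Set.finite_range _)) i

lemma lmin_le_eig {P : Matrix (Fin d) (Fin d) ℝ} (hP : P.IsHermitian) (i : Fin d) :
    lmin P ≤ hP.eigenvalues i := by
  simp only [lmin, dif_pos hP]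
  exact ciInf_le (Set.Finite.bddBelow (Set.finite_range _)) i

lemma lmax_nonneg {P : Matrix (Fin d) (Fin d) ℝ} (hP : P.PosDef) : 0 ≤ lmax P := by
  rcases isEmpty_or_nonempty (Fin d) with h | h
  · simp only [lmax, dif_pos hP.1, iSup_of_empty', Real.sSup_empty, le_refl]
  · exact le_trans (hP.eigenvalues_pos (Classical.arbitrary _)).le (eig_le_lmax hP.1 _)

lemma lmin_nonneg {P : Matrix (Fin d) (Fin d) ℝ} (hP : P.PosDef) : 0 ≤ lmin P := by
  rcases isEmpty_or_nonempty (Fin d) with h | h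
  · simp only [lmin, dif_pos hP.1, iInf_of_isEmpty, Real.sInf_empty, le_refl]
  · simp only [lmin, dif_pos hP.1]
    exact le_ciInf (fun i => (hP.eigenvalues_pos i).le)

lemma T_upper {S P : Matrix (Fin d) (Fin d) ℝ} (hS : S.PosSemidef) (hP : P.PosDef) :
    (msqrt (msqrt S * P * msqrt S)).trace ≤ Real.sqrt (lmax P) * (msqrt S).trace := by
  have hRpsd : (msqrt S).PosSemidef := by
    rw [msqrt_of_psd hS]; exact hS.posSemidef_sqrt
  have hRR : msqrt S * msqrt S = S := by
    rw [msqrt_of_psd hS]; exact hS.sqrt_mul_self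
  have hM : (msqrt S * P * msqrt S).PosSemidef := by
    have := hP.posSemidef.conjTranspose_mul_mul_same (msqrt S)
    rwa [hRpsd.1] at this
  have hCS : ((lmax P) • S).PosSemidef := psd_smul hS (lmax_nonneg hP)
  have hLoew : ((lmax P) • S - msqrt S * P * msqrt S).PosSemidef := by
    have h1 : ((lmax P) • (1 : Matrix (Fin d) (Fin d) ℝ) - P).PosSemidef :=
      shift_upper hP.1 (fun i => eig_le_lmax hP.1 i)
    have h2 := h1.conjTranspose_mul_mul_same (msqrt S)
    rw [hRpsd.1] at h2
    have h3 : msqrt S * ((lmax P) • 1 - P) * msqrt S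
        = (lmax P) • S - msqrt S * P * msqrt S := by
      rw [Matrix.mul_sub, Matrix.sub_mul, Matrix.mul_smul, Matrix.mul_one, Matrix.smul_mul, hRR]
    rwa [h3] at h2
  have htr := trace_mono' (sqrt_loewner_mono hM hCS hLoew)
  rw [← msqrt_of_psd hM, ← msqrt_of_psd hCS, msqrt_smul hS (lmax_nonneg hP),
    Matrix.trace_smul] at htr
  simpa using htr

lemma T_lower {S P : Matrix (Fin d) (Fin d) ℝ} (hS : S.PosSemidef) (hP : P.PosDef) :
    Real.sqrt (lmin P) * (msqrt S).trace ≤ (msqrt (msqrt S * P * msqrt S)).trace := by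
  have hRpsd : (msqrt S).PosSemidef := by
    rw [msqrt_of_psd hS]; exact hS.posSemidef_sqrt
  have hRR : msqrt S * msqrt S = S := by
    rw [msqrt_of_psd hS]; exact hS.sqrt_mul_self
  have hM : (msqrt S * P * msqrt S).PosSemidef := by
    have := hP.posSemidef.conjTranspose_mul_mul_same (msqrt S)
    rwa [hRpsd.1] at this
  have hCS : ((lmin P) • S).PosSemidef := psd_smul hS (lmin_nonneg hP)
  have hLoew : (msqrt S * P * msqrt S - (lmin P) • S).PosSemidef := by
    have h1 : (P - (lmin P) • (1 : Matrix (Fin d) (Fin d) ℝ)).PosSemidef :=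
      shift_lower hP.1 (fun i => lmin_le_eig hP.1 i)
    have h2 := h1.conjTranspose_mul_mul_same (msqrt S)
    rw [hRpsd.1] at h2
    have h3 : msqrt S * (P - (lmin P) • 1) * msqrt S
        = msqrt S * P * msqrt S - (lmin P) • S := by
      rw [Matrix.mul_sub, Matrix.sub_mul, Matrix.mul_smul, Matrix.mul_one, Matrix.smul_mul, hRR]
    rwa [h3] at h2
  have htr := trace_mono' (sqrt_loewner_mono hCS hM hLoew)
  rw [← msqrt_of_psd hM, ← msqrt_of_psd hCS, msqrt_smul hS (lmin_nonneg hP),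
    Matrix.trace_smul] at htr
  simpa using htr

end AuxLemmas

/-- coercivity lower bound
`F(S) ≥ Tr S − 2 (A_max − B_min) Tr(S^(1/2)) + ∑ λₖ Tr Σₖ`. -/
theorem stmt3 {d n : ℕ} (Sig : Fin n → Matrix (Fin d) (Fin d) ℝ)
    (lam : Fin n → ℝ) (hSig : ∀ k, (Sig k).PosDef) (hsum : ∑ k, lam k = 1)
    (S : Matrix (Fin d) (Fin d) ℝ) (hS : S.PosSemidef) :
    Fobj Sig lam S ≥ S.trace
      - 2 * ((∑ i ∈ Finset.univ.filter (fun k => 0 < lam k), lam i * Real.sqrt (lmax (Sig i)))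
          - ∑ j ∈ Finset.univ.filter (fun k => lam k < 0), (-lam j) * Real.sqrt (lmin (Sig j)))
        * (msqrt S).trace
      + ∑ k, lam k * (Sig k).trace := by
  have expand : Fobj Sig lam S
      = S.trace + (∑ k, lam k * (Sig k).trace)
        - 2 * ∑ k, lam k * (msqrt (msqrt S * Sig k * msqrt S)).trace := by
    simp only [Fobj, W2sq]
    have h1 : ∀ k : Fin n, lam k * (S.trace + (Sig k).trace
        - 2 * (msqrt (msqrt S * Sig k * msqrt S)).trace)
        = S.trace * lam k + lam k * (Sig k).trace
          - 2 * (lam k * (msqrt (msqrt S * Sig k * msqrt S)).trace) := fun k => by ring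
    rw [Finset.sum_congr rfl (fun k _ => h1 k), Finset.sum_sub_distrib,
      Finset.sum_add_distrib, ← Finset.mul_sum, ← Finset.mul_sum, hsum, mul_one]
  have hpos : ∀ k ∈ Finset.univ.filter (fun k => 0 < lam k),
      lam k * (msqrt (msqrt S * Sig k * msqrt S)).trace
        ≤ lam k * (Real.sqrt (lmax (Sig k)) * (msqrt S).trace) := fun k hk =>
    mul_le_mul_of_nonneg_left (T_upper hS (hSig k)) (Finset.mem_filter.mp hk).2.le
  have hneg : ∀ k ∈ Finset.univ.filter (fun k => lam k < 0),
      lam k * (msqrt (msqrt S * Sig k * msqrt S)).trace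
        ≤ lam k * (Real.sqrt (lmin (Sig k)) * (msqrt S).trace) := fun k hk =>
    mul_le_mul_of_nonpos_left (T_lower hS (hSig k)) (Finset.mem_filter.mp hk).2.le
  have split1 := Finset.sum_filter_add_sum_filter_not Finset.univ (fun k => 0 < lam k)
    (fun k => lam k * (msqrt (msqrt S * Sig k * msqrt S)).trace)
  have split2 := Finset.sum_filter_add_sum_filter_not
    (Finset.univ.filter (fun k => ¬ 0 < lam k)) (fun k => lam k < 0)
    (fun k => lam k * (msqrt (msqrt S * Sig k * msqrt S)).trace)
  have hff : (Finset.univ.filter (fun k => ¬ 0 < lam k)).filter (fun k => lam k < 0)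
      = Finset.univ.filter (fun k => lam k < 0) := by
    rw [Finset.filter_filter]
    exact Finset.filter_congr
      (fun k _ => ⟨fun h => h.2, fun h => ⟨not_lt.mpr h.le, h⟩⟩)
  have hzero : ∑ k ∈ (Finset.univ.filter (fun k => ¬ 0 < lam k)).filter
      (fun k => ¬ lam k < 0), lam k * (msqrt (msqrt S * Sig k * msqrt S)).trace = 0 := by
    apply Finset.sum_eq_zero
    intro k hk
    simp only [Finset.mem_filter] at hk
    have : lam k = 0 := le_antisymm (not_lt.mp hk.1.2) (not_lt.mp hk.2)
    simp [this]
  have e : ∑ k, lam k * (msqrt (msqrt S * Sig k * msqrt S)).trace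
      = (∑ k ∈ Finset.univ.filter (fun k => 0 < lam k),
          lam k * (msqrt (msqrt S * Sig k * msqrt S)).trace)
        + ∑ k ∈ Finset.univ.filter (fun k => lam k < 0),
          lam k * (msqrt (msqrt S * Sig k * msqrt S)).trace := by
    rw [← split1, ← split2, hff, hzero, add_zero]
  have b1 : ∑ k ∈ Finset.univ.filter (fun k => 0 < lam k),
      lam k * (msqrt (msqrt S * Sig k * msqrt S)).trace
      ≤ (∑ i ∈ Finset.univ.filter (fun k => 0 < lam k),
          lam i * Real.sqrt (lmax (Sig i))) * (msqrt S).trace := by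
    refine (Finset.sum_le_sum hpos).trans_eq ?_
    rw [Finset.sum_mul]
    exact Finset.sum_congr rfl (fun k _ => (mul_assoc _ _ _).symm)
  have b2 : ∑ k ∈ Finset.univ.filter (fun k => lam k < 0),
      lam k * (msqrt (msqrt S * Sig k * msqrt S)).trace
      ≤ ∑ j ∈ Finset.univ.filter (fun k => lam k < 0),
          lam j * (Real.sqrt (lmin (Sig j)) * (msqrt S).trace) :=
    Finset.sum_le_sum hneg
  have e4 : (∑ j ∈ Finset.univ.filter (fun k => lam k < 0),
        (-lam j) * Real.sqrt (lmin (Sig j))) * (msqrt S).trace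
      = - ∑ j ∈ Finset.univ.filter (fun k => lam k < 0),
          lam j * (Real.sqrt (lmin (Sig j)) * (msqrt S).trace) := by
    rw [Finset.sum_mul, ← Finset.sum_neg_distrib]
    exact Finset.sum_congr rfl (fun j _ => by ring)
  have hdist : ((∑ i ∈ Finset.univ.filter (fun k => 0 < lam k),
        lam i * Real.sqrt (lmax (Sig i)))
      - ∑ j ∈ Finset.univ.filter (fun k => lam k < 0),
        (-lam j) * Real.sqrt (lmin (Sig j))) * (msqrt S).trace
      = (∑ i ∈ Finset.univ.filter (fun k => 0 < lam k),
          lam i * Real.sqrt (lmax (Sig i))) * (msqrt S).trace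
        - (∑ j ∈ Finset.univ.filter (fun k => lam k < 0),
          (-lam j) * Real.sqrt (lmin (Sig j))) * (msqrt S).trace := by ring
  rw [ge_iff_le, expand]
  linarith [e, b1, b2, e4, hdist]
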